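/- For every real t > 0 with t ≠ 1/2, set s = log(1/(16t⁴)). Then there exists an invertible 4×4 real matrix P such that P·M_t·P⁻¹ = M'_s and P·W_t·P⁻¹ = (2t)·L'_s, where: M_t is the matrix with rows (1,0,1,t−1), (0,1,1,t), (0,0,1,t+1/2), (0,0,0,1); W_t = N_t·M_t⁻¹·N_t⁻¹·M_t²·N_t⁻¹·M_t⁻¹·N_t with N_t the matrix with rows (1,0,0,0), (2+1/t,1,0,0), (2,1,1,0), (1,1,0,1); M'_s is the matrix with rows (1, 0, √(sinh(s/4)/(3s)), sinh(s/4)/(6s)), (0,1,0,0), (0,0,1,√(sinh(s/4)/(3s))), (0,0,0,1); and L'_s is the matrix with rows (1, (e^s−1)/s, 0, (e^s−s−1)/s²), (0, e^s, 0, (e^s−1)/s), (0,0,1,0), (0,0,0,1). -/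
import Mathlib


/-- The meridian matrix `M_t = ρ_t(m)`. -/
noncomputable def Mmat (t : ℝ) : Matrix (Fin 4) (Fin 4) ℝ :=
  !![1, 0, 1, t - 1;
     0, 1, 1, t;
     0, 0, 1, t + 1 / 2;
     0, 0, 0, 1]

/-- The meridian matrix `N_t = ρ_t(n)`. -/
noncomputable def Nmat (t : ℝ) : Matrix (Fin 4) (Fin 4) ℝ :=
  !![1, 0, 0, 0;
     2 + 1 / t, 1, 0, 0;
     2, 1, 1, 0;
     1, 1, 0, 1]

/-- The longitude matrix `W_t = ρ_t(l)`, `l = n m⁻¹ n⁻¹ m² n⁻¹ m⁻¹ n`. -/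
noncomputable def Wmat (t : ℝ) : Matrix (Fin 4) (Fin 4) ℝ :=
  Nmat t * (Mmat t)⁻¹ * (Nmat t)⁻¹ * (Mmat t) ^ 2 * (Nmat t)⁻¹ * (Mmat t)⁻¹ * Nmat t

/-- The conjugated meridian `M'_s` of equation (6.1). -/
noncomputable def M's (s : ℝ) : Matrix (Fin 4) (Fin 4) ℝ :=
  !![1, 0, Real.sqrt (Real.sinh (s / 4) / (3 * s)), Real.sinh (s / 4) / (6 * s);
     0, 1, 0, 0;
     0, 0, 1, Real.sqrt (Real.sinh (s / 4) / (3 * s));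
     0, 0, 0, 1]

/-- The conjugated longitude `L'_s` of equation (6.1). -/
noncomputable def L's (s : ℝ) : Matrix (Fin 4) (Fin 4) ℝ :=
  !![1, (Real.exp s - 1) / s, 0, (Real.exp s - s - 1) / s ^ 2;
     0, Real.exp s, 0, (Real.exp s - 1) / s;
     0, 0, 1, 0;
     0, 0, 0, 1]

set_option maxHeartbeats 2000000

/-- Equation (6.1): for `t > 0`, `t ≠ 1/2`, with `s = log(1/(16t⁴))`, the peripheral pair
`(M_t, W_t)` is simultaneously conjugate to `(M'_s, (2t)·L'_s)`. -/
theorem stmt_18 (t : ℝ) (ht : 0 < t) (ht' : t ≠ 1 / 2) :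
    ∃ P : Matrix (Fin 4) (Fin 4) ℝ, IsUnit P ∧
      P * Mmat t * P⁻¹ = M's (Real.log (1 / (16 * t ^ 4))) ∧
      P * Wmat t * P⁻¹ = (2 * t) • L's (Real.log (1 / (16 * t ^ 4))) := by
  have ht0 : t ≠ 0 := ne_of_gt ht
  have h2t1 : 2 * t - 1 ≠ 0 := by
    intro h; apply ht'; linarith
  have h2tp1 : 2 * t + 1 ≠ 0 := by positivity
  set s := Real.log (1 / (16 * t ^ 4)) with hs_def
  have hx : (0:ℝ) < 1 / (16 * t ^ 4) := by positivity
  have hexp : Real.exp s = 1 / (16 * t ^ 4) := Real.exp_log hx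
  have hs4 : s = 4 * Real.log (1 / (2 * t)) := by
    rw [hs_def, show (1:ℝ) / (16 * t ^ 4) = (1 / (2 * t)) ^ 4 by
      rw [div_pow]; norm_num [mul_pow], Real.log_pow]
    push_cast; ring
  have hq4 : s / 4 = Real.log (1 / (2 * t)) := by rw [hs4]; ring
  have hes4 : Real.exp (s / 4) = 1 / (2 * t) := by
    rw [hq4, Real.exp_log (by positivity)]
  have hes4' : Real.exp (-(s / 4)) = 2 * t := by
    rw [Real.exp_neg, hes4, one_div, inv_inv]
  have hsinh : Real.sinh (s / 4) = (1 / (2 * t) - 2 * t) / 2 := by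
    rw [Real.sinh_eq, hes4, hes4']
  have hne1 : (1:ℝ) / (16 * t ^ 4) ≠ 1 := by
    intro h
    have h16 : (16:ℝ) * t ^ 4 = 1 := by
      field_simp at h; linarith
    have hz : (2 * t - 1) * ((2 * t + 1) * (4 * t ^ 2 + 1)) = 0 := by linear_combination h16
    rcases mul_eq_zero.mp hz with h' | h'
    · exact h2t1 h'
    · nlinarith
  have hs0 : s ≠ 0 := by
    rw [hs_def]; intro h
    rcases Real.log_eq_zero.mp h with h' | h' | h'
    · exact hx.ne' h'
    · exact hne1 h'
    · nlinarith
  have hapos : 0 < Real.sinh (s / 4) / (3 * s) := by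
    rcases lt_or_gt_of_ne ht' with hlt | hgt
    · have hsp : 0 < s := by
        rw [hs_def]
        apply Real.log_pos
        rw [lt_div_iff₀ (by positivity)]
        have h1 : t^2 < 1/4 := by nlinarith
        nlinarith [mul_pos (show (0:ℝ) < 1/4 - t^2 by linarith) (show (0:ℝ) < t^2 + 1/4 by positivity)]
      have hsh : 0 < Real.sinh (s / 4) := Real.sinh_pos_iff.mpr (by linarith)
      exact div_pos hsh (by linarith)
    · have hsn : s < 0 := by
        rw [hs_def]
        apply Real.log_neg hx
        rw [div_lt_one (by positivity)]
        have h1 : 1/4 < t^2 := by nlinarith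
        nlinarith [mul_pos (show (0:ℝ) < t^2 - 1/4 by linarith) (show (0:ℝ) < t^2 + 1/4 by positivity)]
      have hsh : Real.sinh (s / 4) < 0 := Real.sinh_neg_iff.mpr (by linarith)
      exact div_pos_of_neg_of_neg hsh (by linarith)
  set u := Real.sqrt (Real.sinh (s / 4) / (3 * s)) with hu_def
  have hu0 : u ≠ 0 := ne_of_gt (Real.sqrt_pos.mpr hapos)
  have hu2 : u ^ 2 = Real.sinh (s / 4) / (3 * s) := Real.sq_sqrt hapos.le
  have hu2' : 12 * t * s * u ^ 2 = 1 - 4 * t ^ 2 := by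
    rw [hu2, hsinh]; field_simp; ring
  -- explicit matrices
  set P : Matrix (Fin 4) (Fin 4) ℝ :=
    !![s*(2*t-1)^2*(2*t+1), 0, s*(5-2*t)*(2*t-1)^2/2, 6*(2*t-1)^2*(2*t+1) + s*(4*t^2-2*t+3)*(2*t-1);
       s^2*t*(2*t-1)*(2*t+1), -(s^2*t*(2*t-1)*(2*t+1)), 2*t*s^2*(2*t-1), 6*t*s*(2*t-1)*(2*t+1) + s^2*t*(4*t^2-2*t+3);
       0, 0, -(12*t*u*s^2*(2*t-1)), 0;
       0, 0, 0, -(6*t*s^2*(2*t-1)*(2*t+1))] with hP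
  have hMi : (Mmat t)⁻¹ =
      !![1, 0, -1, 3/2; 0, 1, -1, 1/2; 0, 0, 1, -1/2 - t; 0, 0, 0, 1] := by
    apply Matrix.inv_eq_right_inv
    ext i j
    fin_cases i <;> fin_cases j <;>
      simp [Mmat, Matrix.mul_apply, Fin.sum_univ_four, Matrix.vecHead, Matrix.vecTail,
        Matrix.one_apply] <;> ring
  have hNi : (Nmat t)⁻¹ =
      !![1, 0, 0, 0; (-1 - 2*t)/t, 1, 0, 0; 1/t, -1, 1, 0; (1 + t)/t, -1, 0, 1] := by
    apply Matrix.inv_eq_right_inv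
    ext i j
    fin_cases i <;> fin_cases j <;>
      simp [Nmat, Matrix.mul_apply, Fin.sum_univ_four, Matrix.vecHead, Matrix.vecTail,
        Matrix.one_apply] <;> (try field_simp) <;> ring
  have e1 : Nmat t * !![(1:ℝ), 0, -1, 3/2; 0, 1, -1, 1/2; 0, 0, 1, -1/2 - t; 0, 0, 0, 1] =
      !![1, 0, -1, 3/2;
         (1 + 2*t)/t, 1, (-1 - 3*t)/t, (3/2 + 7*t/2)/t;
         2, 1, -2, 3 - t;
         1, 1, -2, 3] := by
    ext i j
    fin_cases i <;> fin_cases j <;>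
      simp [Nmat, Matrix.mul_apply, Fin.sum_univ_four, Matrix.vecHead, Matrix.vecTail] <;>
      (try field_simp) <;> ring
  have e2 : (!![(1:ℝ), 0, -1, 3/2;
         (1 + 2*t)/t, 1, (-1 - 3*t)/t, (3/2 + 7*t/2)/t;
         2, 1, -2, 3 - t;
         1, 1, -2, 3] : Matrix (Fin 4) (Fin 4) ℝ) *
      !![1, 0, 0, 0; (-1 - 2*t)/t, 1, 0, 0; 1/t, -1, 1, 0; (1 + t)/t, -1, 0, 1] =
      !![(1/2 + 5*t/2)/t, -1/2, -1, 3/2;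
         (1/2 + 2*t + 7*t^2/2)/t^2, (-1/2 + t/2)/t, (-1 - 3*t)/t, (3/2 + 7*t/2)/t;
         2 - t, t, -2, 3 - t;
         2, 0, -2, 3] := by
    ext i j
    fin_cases i <;> fin_cases j <;>
      simp [Matrix.mul_apply, Fin.sum_univ_four, Matrix.vecHead, Matrix.vecTail] <;>
      (try field_simp) <;> ring
  have e3a : (!![(1/2 + 5*t/2)/t, -1/2, -1, 3/2;
         (1/2 + 2*t + 7*t^2/2)/t^2, (-1/2 + t/2)/t, (-1 - 3*t)/t, (3/2 + 7*t/2)/t;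
         2 - t, t, -2, 3 - t;
         2, 0, -2, 3] : Matrix (Fin 4) (Fin 4) ℝ) * Mmat t =
      !![(1/2 + 5*t/2)/t, -1/2, (1/2 + t)/t, (-1/2 - t + t^2)/t;
         (1/2 + 2*t + 7*t^2/2)/t^2, (-1/2 + t/2)/t, (1/2 + t/2 + t^2)/t^2, (-1/2 - t/2 - t^2 + t^3)/t^2;
         2 - t, t, 0, 0;
         2, 0, 0, 0] := by
    ext i j
    fin_cases i <;> fin_cases j <;>
      simp [Mmat, Matrix.mul_apply, Fin.sum_univ_four, Matrix.vecHead, Matrix.vecTail] <;>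
      (try field_simp) <;> ring
  have e3b : (!![(1/2 + 5*t/2)/t, -1/2, (1/2 + t)/t, (-1/2 - t + t^2)/t;
         (1/2 + 2*t + 7*t^2/2)/t^2, (-1/2 + t/2)/t, (1/2 + t/2 + t^2)/t^2, (-1/2 - t/2 - t^2 + t^3)/t^2;
         2 - t, t, 0, 0;
         2, 0, 0, 0] : Matrix (Fin 4) (Fin 4) ℝ) * Mmat t =
      !![(1/2 + 5*t/2)/t, -1/2, (1 + 3*t)/t, (-3/4 - 2*t + 4*t^2)/t;
         (1/2 + 2*t + 7*t^2/2)/t^2, (-1/2 + t/2)/t, (1 + 2*t + 5*t^2)/t^2, (-3/4 - 5*t/4 - 2*t^2 + 6*t^3)/t^2;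
         2 - t, t, 2, -2 + 3*t;
         2, 0, 2, -2 + 2*t] := by
    ext i j
    fin_cases i <;> fin_cases j <;>
      simp [Mmat, Matrix.mul_apply, Fin.sum_univ_four, Matrix.vecHead, Matrix.vecTail] <;>
      (try field_simp) <;> ring
  have e3 : (!![(1/2 + 5*t/2)/t, -1/2, -1, 3/2;
         (1/2 + 2*t + 7*t^2/2)/t^2, (-1/2 + t/2)/t, (-1 - 3*t)/t, (3/2 + 7*t/2)/t;
         2 - t, t, -2, 3 - t;
         2, 0, -2, 3] : Matrix (Fin 4) (Fin 4) ℝ) * (Mmat t * Mmat t) =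
      !![(1/2 + 5*t/2)/t, -1/2, (1 + 3*t)/t, (-3/4 - 2*t + 4*t^2)/t;
         (1/2 + 2*t + 7*t^2/2)/t^2, (-1/2 + t/2)/t, (1 + 2*t + 5*t^2)/t^2, (-3/4 - 5*t/4 - 2*t^2 + 6*t^3)/t^2;
         2 - t, t, 2, -2 + 3*t;
         2, 0, 2, -2 + 2*t] := by
    rw [← Matrix.mul_assoc, e3a, e3b]
  have e4 : (!![(1/2 + 5*t/2)/t, -1/2, (1 + 3*t)/t, (-3/4 - 2*t + 4*t^2)/t;
         (1/2 + 2*t + 7*t^2/2)/t^2, (-1/2 + t/2)/t, (1 + 2*t + 5*t^2)/t^2, (-3/4 - 5*t/4 - 2*t^2 + 6*t^3)/t^2;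
         2 - t, t, 2, -2 + 3*t;
         2, 0, 2, -2 + 2*t] : Matrix (Fin 4) (Fin 4) ℝ) *
      !![1, 0, 0, 0; (-1 - 2*t)/t, 1, 0, 0; 1/t, -1, 1, 0; (1 + t)/t, -1, 0, 1] =
      !![(1/4 + 5*t/4 + 11*t^2/2 + 4*t^3)/t^2, (-1/4 - 3*t/2 - 4*t^2)/t, (1 + 3*t)/t, (-3/4 - 2*t + 4*t^2)/t;
         (1/4 + t + 17*t^2/4 + 13*t^3/2 + 6*t^4)/t^3, (-1/4 - 5*t/4 - 5*t^2/2 - 6*t^3)/t^2, (1 + 2*t + 5*t^2)/t^2, (-3/4 - 5*t/4 - 2*t^2 + 6*t^3)/t^2;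
         2, -2*t, 2, -2 + 3*t;
         2 + 2*t, -2*t, 2, -2 + 2*t] := by
    ext i j
    fin_cases i <;> fin_cases j <;>
      simp [Matrix.mul_apply, Fin.sum_univ_four, Matrix.vecHead, Matrix.vecTail] <;>
      (try field_simp) <;> ring
  have e5 : (!![(1/4 + 5*t/4 + 11*t^2/2 + 4*t^3)/t^2, (-1/4 - 3*t/2 - 4*t^2)/t, (1 + 3*t)/t, (-3/4 - 2*t + 4*t^2)/t;
         (1/4 + t + 17*t^2/4 + 13*t^3/2 + 6*t^4)/t^3, (-1/4 - 5*t/4 - 5*t^2/2 - 6*t^3)/t^2, (1 + 2*t + 5*t^2)/t^2, (-3/4 - 5*t/4 - 2*t^2 + 6*t^3)/t^2;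
         2, -2*t, 2, -2 + 3*t;
         2 + 2*t, -2*t, 2, -2 + 2*t] : Matrix (Fin 4) (Fin 4) ℝ) *
      !![1, 0, -1, 3/2; 0, 1, -1, 1/2; 0, 0, 1, -1/2 - t; 0, 0, 0, 1] =
      !![(1/4 + 5*t/4 + 11*t^2/2 + 4*t^3)/t^2, (-1/4 - 3*t/2 - 4*t^2)/t, (-1/4 - t^2)/t^2, (3/8 + t/2 + 3*t^2 + 5*t^3)/t^2;
         (1/4 + t + 17*t^2/4 + 13*t^3/2 + 6*t^4)/t^3, (-1/4 - 5*t/4 - 5*t^2/2 - 6*t^3)/t^2, (-1/4 + t/4 - t^2 + t^3)/t^3, (3/8 + t/8 + 5*t^2/2 + 2*t^3 + 7*t^4)/t^3;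
         2, -2*t, 2*t, 0;
         2 + 2*t, -2*t, 0, 2*t] := by
    ext i j
    fin_cases i <;> fin_cases j <;>
      simp [Matrix.mul_apply, Fin.sum_univ_four, Matrix.vecHead, Matrix.vecTail] <;>
      (try field_simp) <;> ring
  have e6 : (!![(1/4 + 5*t/4 + 11*t^2/2 + 4*t^3)/t^2, (-1/4 - 3*t/2 - 4*t^2)/t, (-1/4 - t^2)/t^2, (3/8 + t/2 + 3*t^2 + 5*t^3)/t^2;
         (1/4 + t + 17*t^2/4 + 13*t^3/2 + 6*t^4)/t^3, (-1/4 - 5*t/4 - 5*t^2/2 - 6*t^3)/t^2, (-1/4 + t/4 - t^2 + t^3)/t^3, (3/8 + t/8 + 5*t^2/2 + 2*t^3 + 7*t^4)/t^3;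
         2, -2*t, 2*t, 0;
         2 + 2*t, -2*t, 0, 2*t] : Matrix (Fin 4) (Fin 4) ℝ) * Nmat t =
      !![(-1/8 - t/4 - t^2/2 + t^3)/t^2, (1/8 + t/4 + t^2/2 + t^3)/t^2, (-1/4 - t^2)/t^2, (3/8 + t/2 + 3*t^2 + 5*t^3)/t^2;
         (-1/8 - t/8 - t^2/4 - t^3/2 + t^4)/t^3, (1/8 + t/8 + t^2/4 + t^3/2 + t^4)/t^3, (-1/4 + t/4 - t^2 + t^3)/t^3, (3/8 + t/8 + 5*t^2/2 + 2*t^3 + 7*t^4)/t^3;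
         0, 0, 2*t, 0;
         0, 0, 0, 2*t] := by
    ext i j
    fin_cases i <;> fin_cases j <;>
      simp [Nmat, Matrix.mul_apply, Fin.sum_univ_four, Matrix.vecHead, Matrix.vecTail] <;>
      (try field_simp) <;> ring
  have hW : Wmat t =
      !![(-1/8 - t/4 - t^2/2 + t^3)/t^2, (1/8 + t/4 + t^2/2 + t^3)/t^2, (-1/4 - t^2)/t^2, (3/8 + t/2 + 3*t^2 + 5*t^3)/t^2;
         (-1/8 - t/8 - t^2/4 - t^3/2 + t^4)/t^3, (1/8 + t/8 + t^2/4 + t^3/2 + t^4)/t^3, (-1/4 + t/4 - t^2 + t^3)/t^3, (3/8 + t/8 + 5*t^2/2 + 2*t^3 + 7*t^4)/t^3;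
         0, 0, 2*t, 0;
         0, 0, 0, 2*t] := by
    rw [Wmat, hMi, hNi, pow_two, e1, e2, e3, e4, e5, e6]
  have hM's : M's s = !![1, 0, u, u^2/2; 0, 1, 0, 0; 0, 0, 1, u; 0, 0, 0, 1] := by
    ext i j
    fin_cases i <;> fin_cases j <;>
      simp [M's, Matrix.vecHead, Matrix.vecTail, hu2, ← hu_def] <;> ring
  have hL's : L's s =
      !![1, (1/(16*t^4) - 1)/s, 0, (1/(16*t^4) - s - 1)/s^2;
         0, 1/(16*t^4), 0, (1/(16*t^4) - 1)/s;
         0, 0, 1, 0;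
         0, 0, 0, 1] := by
    simp only [L's, hexp]
  have conj1 : P * Mmat t = !![1, 0, u, u^2/2; 0, 1, 0, 0; 0, 0, 1, u; 0, 0, 0, 1] * P := by
    ext i j
    fin_cases i <;> fin_cases j <;>
      simp [hP, Mmat, Matrix.mul_apply, Fin.sum_univ_four, Matrix.vecHead, Matrix.vecTail] <;>
      first
        | ring1
        | linear_combination (s*(2*t-1)) * hu2'
        | linear_combination (s*(t^2-1/4)) * hu2'
  have conj2 : P * !![(-1/8 - t/4 - t^2/2 + t^3)/t^2, (1/8 + t/4 + t^2/2 + t^3)/t^2, (-1/4 - t^2)/t^2, (3/8 + t/2 + 3*t^2 + 5*t^3)/t^2;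
         (-1/8 - t/8 - t^2/4 - t^3/2 + t^4)/t^3, (1/8 + t/8 + t^2/4 + t^3/2 + t^4)/t^3, (-1/4 + t/4 - t^2 + t^3)/t^3, (3/8 + t/8 + 5*t^2/2 + 2*t^3 + 7*t^4)/t^3;
         0, 0, 2*t, 0;
         0, 0, 0, 2*t] =
      ((2 * t) • !![1, (1/(16*t^4) - 1)/s, 0, (1/(16*t^4) - s - 1)/s^2;
         0, 1/(16*t^4), 0, (1/(16*t^4) - 1)/s;
         0, 0, 1, 0;
         0, 0, 0, 1]) * P := by
    ext i j
    fin_cases i <;> fin_cases j <;>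
      simp [hP, Matrix.mul_apply, Fin.sum_univ_four, Matrix.vecHead, Matrix.vecTail,
        Matrix.smul_apply, smul_eq_mul] <;>
      (try field_simp) <;> ring
  have hdet : P.det = -72 * t^3 * u * s^7 * (2*t-1)^5 * (2*t+1)^3 := by
    rw [hP]
    simp [Matrix.det_succ_row_zero, Fin.sum_univ_succ, Matrix.vecHead, Matrix.vecTail]
    ring
  have hdu : IsUnit P.det := by
    rw [hdet]
    exact IsUnit.mul (IsUnit.mul (IsUnit.mul (IsUnit.mul (IsUnit.mul
      (isUnit_iff_ne_zero.mpr (by norm_num)) (isUnit_iff_ne_zero.mpr (pow_ne_zero 3 ht0)))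
      (isUnit_iff_ne_zero.mpr hu0)) (isUnit_iff_ne_zero.mpr (pow_ne_zero 7 hs0)))
      (isUnit_iff_ne_zero.mpr (pow_ne_zero 5 h2t1))) (isUnit_iff_ne_zero.mpr (pow_ne_zero 3 h2tp1))
  refine ⟨P, (Matrix.isUnit_iff_isUnit_det P).mpr hdu, ?_, ?_⟩
  · calc P * Mmat t * P⁻¹
        = !![1, 0, u, u^2/2; 0, 1, 0, 0; 0, 0, 1, u; 0, 0, 0, 1] * P * P⁻¹ := by rw [conj1]
      _ = !![1, 0, u, u^2/2; 0, 1, 0, 0; 0, 0, 1, u; 0, 0, 0, 1] := by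
          rw [Matrix.mul_assoc, Matrix.mul_nonsing_inv P hdu, Matrix.mul_one]
      _ = M's s := hM's.symm
  · calc P * Wmat t * P⁻¹
        = ((2 * t) • !![1, (1/(16*t^4) - 1)/s, 0, (1/(16*t^4) - s - 1)/s^2;
            0, 1/(16*t^4), 0, (1/(16*t^4) - 1)/s;
            0, 0, 1, 0;
            0, 0, 0, 1]) * P * P⁻¹ := by rw [hW, conj2]
      _ = (2 * t) • !![1, (1/(16*t^4) - 1)/s, 0, (1/(16*t^4) - s - 1)/s^2;
            0, 1/(16*t^4), 0, (1/(16*t^4) - 1)/s;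
            0, 0, 1, 0;
            0, 0, 0, 1] := by
          rw [Matrix.mul_assoc, Matrix.mul_nonsing_inv P hdu, Matrix.mul_one]
      _ = (2 * t) • L's s := by rw [hL's]
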